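/- Let k ≥ 1 be an integer and let G = (V,E) be a (k,k)-tight hypergraph. Then G is represented by a 2-uniform (k,k)-tight multigraph: there exist a multiset F of 2-element subsets of V such that H = (V,F) is (k,k)-tight, and a bijection f from the multiset E to the multiset F with f(e) ⊆ e for every e ∈ E. (Equivalently, by the theorem of Frank et al. identifying k-arborescences with (k,k)-tight hypergraphs, every hypergraph k-arborescence is represented by a 2-uniform k-arborescence.) -/
import Mathlib


/-- The number of edges of the multiset `E` spanned by the vertex set `W`. -/
def spanCount {V : Type*} [DecidableEq V] (E : Multiset (Finset V)) (W : Finset V) : ℕ :=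
  (E.filter fun e => e ⊆ W).card

/-- A hypergraph with edge multiset `E` is `(k,ℓ)`-sparse if every vertex subset spanning
at least one edge spans at most `k|W| - ℓ` edges. -/
def Sparse {V : Type*} [DecidableEq V] (k l : ℕ) (E : Multiset (Finset V)) : Prop :=
  ∀ W : Finset V, 1 ≤ spanCount E W → spanCount E W + l ≤ k * W.card

/-- A hypergraph on the finite vertex type `V` is `(k,ℓ)`-tight if it is `(k,ℓ)`-sparse
and has exactly `k|V| - ℓ` edges. -/
def Tight {V : Type*} [Fintype V] [DecidableEq V] (k l : ℕ) (E : Multiset (Finset V)) : Prop :=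
  Sparse k l E ∧ Multiset.card E + l = k * Fintype.card V

namespace Stmt19

variable {V : Type*} [DecidableEq V]

lemma spanCount_cons (a : Finset V) (E : Multiset (Finset V)) (W : Finset V) :
    spanCount (a ::ₘ E) W = (if a ⊆ W then 1 else 0) + spanCount E W := by
  simp only [spanCount, Multiset.filter_cons]
  split <;> simp [*] <;> omega

lemma mem_span (E : Multiset (Finset V)) {e W : Finset V} (he : e ∈ E) (hW : e ⊆ W) :
    1 ≤ spanCount E W := by
  have : e ∈ E.filter fun x => x ⊆ W := Multiset.mem_filter.2 ⟨he, hW⟩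
  exact Multiset.card_pos.2 (fun h => by simp [h] at this)

/-- key supermodularity-with-slack inequality -/
lemma key (E : Multiset (Finset V)) {e : Finset V} (he : e ∈ E) (A B : Finset V)
    (hU : e ⊆ A ∪ B) (hA : ¬ e ⊆ A) (hB : ¬ e ⊆ B) :
    spanCount E A + spanCount E B + 1 ≤ spanCount E (A ∩ B) + spanCount E (A ∪ B) := by
  classical
  have hadd := Multiset.filter_add_filter (fun x : Finset V => x ⊆ A) (fun x => x ⊆ B) E
  have hcard : spanCount E A + spanCount E B =
      (E.filter fun x => x ⊆ A ∨ x ⊆ B).card + (E.filter fun x => x ⊆ A ∧ x ⊆ B).card := by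
    unfold spanCount
    rw [← Multiset.card_add, ← Multiset.card_add, hadd]
  have hI : (E.filter fun x => x ⊆ A ∧ x ⊆ B) = E.filter fun x => x ⊆ A ∩ B := by
    apply Multiset.filter_congr
    intro x _
    constructor
    · intro ⟨h1, h2⟩; exact Finset.subset_inter h1 h2
    · intro h; exact ⟨h.trans Finset.inter_subset_left, h.trans Finset.inter_subset_right⟩
  -- strict part
  have hE : E = e ::ₘ E.erase e := (Multiset.cons_erase he).symm
  have h1 : (E.filter fun x => x ⊆ A ∨ x ⊆ B).card + 1 ≤ spanCount E (A ∪ B) := by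
    rw [hE]
    rw [Multiset.filter_cons, spanCount_cons]
    have : ¬ (e ⊆ A ∨ e ⊆ B) := by tauto
    rw [if_neg this, if_pos hU]
    simp only [zero_add, Multiset.card_add]
    have hmono : ((E.erase e).filter fun x => x ⊆ A ∨ x ⊆ B) ≤
        (E.erase e).filter fun x => x ⊆ A ∪ B := by
      apply Multiset.monotone_filter_right
      intro x hx
      rcases hx with h | h
      · exact h.trans Finset.subset_union_left
      · exact h.trans Finset.subset_union_right
    have := Multiset.card_le_card hmono
    unfold spanCount
    omega
  rw [hI] at hcard
  unfold spanCount at *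
  omega

/-- The trimming lemma: any edge of size ≥ 3 can be shrunk by a vertex keeping sparsity. -/
lemma trim {k : ℕ} (hk : 1 ≤ k) {E : Multiset (Finset V)} (hs : Sparse k k E)
    {e : Finset V} (he : e ∈ E) (hce : 3 ≤ e.card) :
    ∃ v ∈ e, Sparse k k (e.erase v ::ₘ E.erase e) := by
  classical
  by_contra hcon
  push_neg at hcon
  -- each v ∈ e has a tight witness
  have hwit : ∀ v ∈ e, ∃ W : Finset V, e.erase v ⊆ W ∧ v ∉ W ∧
      spanCount E W + k = k * W.card := by
    intro v hv
    have := hcon v hv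
    unfold Sparse at this
    push_neg at this
    obtain ⟨W, hW1, hW2⟩ := this
    set E' := e.erase v ::ₘ E.erase e with hE'
    have hspan' : spanCount E' W = (if e.erase v ⊆ W then 1 else 0) + spanCount (E.erase e) W :=
      spanCount_cons _ _ _
    have hspanE : spanCount E W = (if e ⊆ W then 1 else 0) + spanCount (E.erase e) W := by
      conv_lhs => rw [(Multiset.cons_erase he).symm]
      exact spanCount_cons _ _ _
    by_cases hev : e.erase v ⊆ W
    · by_cases heW : e ⊆ W
      · -- spanCount E' W = spanCount E W, contradiction with sparsity of E
        have heq : spanCount E' W = spanCount E W := by rw [hspan', hspanE, if_pos hev, if_pos heW]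
        have := hs W (by omega)
        omega
      · -- the interesting case: tight witness
        refine ⟨W, hev, fun hvW => heW ?_, ?_⟩
        · intro x hx
          by_cases hxv : x = v
          · exact hxv ▸ hvW
          · exact hev (Finset.mem_erase.2 ⟨hxv, hx⟩)
        · have heq : spanCount E' W = spanCount E W + 1 := by
            rw [hspan', hspanE, if_pos hev, if_neg heW]; omega
          -- spanCount E W + 1 + k > k * W.card
          by_cases h0 : 1 ≤ spanCount E W
          · have := hs W h0
            omega
          · -- spanCount E W = 0; then k * W.card ≤ k, but |W| ≥ 2
            exfalso
            have hWc : 2 ≤ W.card := by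
              have : (e.erase v).card ≤ W.card := Finset.card_le_card hev
              rw [Finset.card_erase_of_mem hv] at this
              omega
            have : 2 * k ≤ k * W.card := by
              calc 2 * k = k * 2 := by ring
              _ ≤ k * W.card := Nat.mul_le_mul_left k hWc
            omega
    · -- spanCount E' W ≤ spanCount E W
      have hle : spanCount E' W ≤ spanCount E W := by
        rw [hspan', hspanE, if_neg hev]
        split <;> omega
      have := hs W (by omega)
      omega
  -- pick two distinct vertices of e
  obtain ⟨v, hv, w, hw, hvw⟩ := Finset.one_lt_card.mp (by omega : 1 < e.card)
  obtain ⟨A, hAe, hAv, hAt⟩ := hwit v hv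
  obtain ⟨B, hBe, hBw, hBt⟩ := hwit w hw
  have hU : e ⊆ A ∪ B := by
    intro x hx
    by_cases hxv : x = v
    · exact Finset.mem_union_right _ (hBe (Finset.mem_erase.2 ⟨hxv ▸ hvw, hxv ▸ hx⟩))
    · exact Finset.mem_union_left _ (hAe (Finset.mem_erase.2 ⟨hxv, hx⟩))
  have hA : ¬ e ⊆ A := fun h => hAv (h hv)
  have hB : ¬ e ⊆ B := fun h => hBw (h hw)
  have hkey := key E he A B hU hA hB
  have hUs : spanCount E (A ∪ B) + k ≤ k * (A ∪ B).card := hs _ (mem_span E he hU)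
  have hcards : (A ∪ B).card + (A ∩ B).card = A.card + B.card :=
    Finset.card_union_add_card_inter A B
  have hkc : k * (A ∪ B).card + k * (A ∩ B).card = k * A.card + k * B.card := by
    rw [← Nat.mul_add, hcards, Nat.mul_add]
  -- the intersection is nonempty: it contains e \ {v, w}, which has ≥ 1 element
  have hIne : 1 ≤ (A ∩ B).card := by
    obtain ⟨u, hu, hue⟩ : ∃ u ∈ e.erase v, u ≠ w := by
      have h2 : 2 ≤ (e.erase v).card := by rw [Finset.card_erase_of_mem hv]; omega
      obtain ⟨a, ha, b, hb, hab⟩ := Finset.one_lt_card.mp (by omega : 1 < (e.erase v).card)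
      by_cases haw : a = w
      · exact ⟨b, hb, fun h => hab (by rw [haw, h])⟩
      · exact ⟨a, ha, haw⟩
    have huA : u ∈ A := hAe hu
    have huB : u ∈ B := hBe (Finset.mem_erase.2 ⟨hue, (Finset.mem_erase.1 hu).2⟩)
    exact Finset.card_pos.2 ⟨u, Finset.mem_inter.2 ⟨huA, huB⟩⟩
  have hkI : k ≤ k * (A ∩ B).card := Nat.le_mul_of_pos_right k hIne
  have hIcase : spanCount E (A ∩ B) = 0 ∨ spanCount E (A ∩ B) + k ≤ k * (A ∩ B).card := by
    by_cases h : 1 ≤ spanCount E (A ∩ B)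
    · exact Or.inr (hs _ h)
    · exact Or.inl (by omega)
  omega

lemma main {k : ℕ} (hk : 1 ≤ k) :
    ∀ n (E : Multiset (Finset V)), (E.map Finset.card).sum ≤ n →
      Sparse k k E → (∀ e ∈ E, e.Nonempty) →
      ∃ F : Multiset (Finset V), (∀ f ∈ F, f.card = 2) ∧ Sparse k k F ∧
        ∃ R : Multiset (Finset V × Finset V),
          R.map Prod.fst = E ∧ R.map Prod.snd = F ∧ ∀ p ∈ R, p.2 ⊆ p.1 := by
  intro n
  induction n with
  | zero =>
    intro E hsum _ hne
    have hE0 : E = 0 := by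
      rcases Multiset.empty_or_exists_mem E with h | ⟨e, he⟩
      · exact h
      · exfalso
        have h1 : 1 ≤ e.card := Finset.card_pos.2 (hne e he)
        have : e.card ≤ (E.map Finset.card).sum := Multiset.le_sum_of_mem (Multiset.mem_map_of_mem _ he)
        omega
    subst hE0
    exact ⟨0, by simp, fun W h => by simp [spanCount] at h, 0, by simp, by simp, by simp⟩
  | succ n ih =>
    intro E hsum hs hne
    by_cases hbig : ∃ e ∈ E, 3 ≤ e.card
    · obtain ⟨e, he, hce⟩ := hbig
      obtain ⟨v, hv, hs'⟩ := trim hk hs he hce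
      set E' : Multiset (Finset V) := e.erase v ::ₘ E.erase e with hE'
      have hEeq : E = e ::ₘ E.erase e := (Multiset.cons_erase he).symm
      have hsum' : (E'.map Finset.card).sum ≤ n := by
        have h1 : (E.map Finset.card).sum = e.card + ((E.erase e).map Finset.card).sum := by
          conv_lhs => rw [hEeq]
          simp
        have h2 : (E'.map Finset.card).sum = (e.card - 1) + ((E.erase e).map Finset.card).sum := by
          rw [hE']
          simp [Finset.card_erase_of_mem hv]
        omega
      have hne' : ∀ f ∈ E', f.Nonempty := by
        intro f hf
        rw [hE', Multiset.mem_cons] at hf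
        rcases hf with h | h
        · subst h
          rw [← Finset.card_pos, Finset.card_erase_of_mem hv]; omega
        · exact hne f (Multiset.mem_of_mem_erase h)
      obtain ⟨F, hF2, hFs, R', hR1, hR2, hR3⟩ := ih E' hsum' hs' hne'
      -- find the pair of R' corresponding to e.erase v
      have hmem : e.erase v ∈ R'.map Prod.fst := by rw [hR1, hE']; exact Multiset.mem_cons_self _ _
      obtain ⟨p₀, hp₀, hp₀1⟩ := Multiset.mem_map.1 hmem
      refine ⟨F, hF2, hFs, (e, p₀.2) ::ₘ R'.erase p₀, ?_, ?_, ?_⟩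
      · rw [Multiset.map_cons]
        have hR'eq : R' = p₀ ::ₘ R'.erase p₀ := (Multiset.cons_erase hp₀).symm
        have : p₀.1 ::ₘ (R'.erase p₀).map Prod.fst = e.erase v ::ₘ E.erase e := by
          rw [← Multiset.map_cons, ← hR'eq, hR1, hE']
        rw [hp₀1] at this
        have h2 : (R'.erase p₀).map Prod.fst = E.erase e := (Multiset.cons_inj_right _).1 this
        rw [h2, ← hEeq]
      · rw [Multiset.map_cons]
        have hR'eq : R' = p₀ ::ₘ R'.erase p₀ := (Multiset.cons_erase hp₀).symm
        rw [← hR2]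
        conv_rhs => rw [hR'eq]
        rw [Multiset.map_cons]
      · intro p hp
        rw [Multiset.mem_cons] at hp
        rcases hp with h | h
        · subst h
          have h1 : p₀.2 ⊆ p₀.1 := hR3 p₀ hp₀
          rw [hp₀1] at h1
          exact h1.trans (Finset.erase_subset _ _)
        · exact hR3 p (Multiset.mem_of_mem_erase h)
    · push_neg at hbig
      have h2 : ∀ f ∈ E, f.card = 2 := by
        intro f hf
        have hle : f.card ≤ 2 := by have := hbig f hf; omega
        have h1 : 1 ≤ f.card := Finset.card_pos.2 (hne f hf)
        by_contra hne2
        have hc1 : f.card = 1 := by omega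
        have := hs f (mem_span E hf (Finset.Subset.refl f))
        rw [hc1] at this
        have h1' := mem_span E hf (Finset.Subset.refl f)
        omega
      refine ⟨E, h2, hs, E.map (fun x => (x, x)), ?_, ?_, ?_⟩
      · rw [Multiset.map_map]; simp
      · rw [Multiset.map_map]; simp
      · intro p hp
        obtain ⟨x, _, hx⟩ := Multiset.mem_map.1 hp
        subst hx
        exact Finset.Subset.refl x

end Stmt19

/-- Every `(k,k)`-tight hypergraph (a hypergraph `k`-arborescence) is represented by a
`2`-uniform `(k,k)`-tight multigraph: there are a multiset `F` of `2`-element subsets of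
`V` forming a `(k,k)`-tight hypergraph and a bijection from `E` to `F` (encoded as a
multiset `R` of pairs) matching each edge `e` to a `2`-element subset of `e`. -/
theorem stmt_19 {V : Type*} [Fintype V] [DecidableEq V] (k : ℕ) (hk : 1 ≤ k)
    (E : Multiset (Finset V)) (hne : ∀ e ∈ E, e.Nonempty) (ht : Tight k k E) :
    ∃ F : Multiset (Finset V), (∀ e ∈ F, e.card = 2) ∧ Tight k k F ∧
      ∃ R : Multiset (Finset V × Finset V),
        R.map Prod.fst = E ∧ R.map Prod.snd = F ∧ ∀ p ∈ R, p.2 ⊆ p.1 := by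
  classical
  obtain ⟨hs, hcard⟩ := ht
  obtain ⟨F, hF2, hFs, R, hR1, hR2, hR3⟩ :=
    Stmt19.main hk (E.map Finset.card).sum E le_rfl hs hne
  have hcardF : Multiset.card F = Multiset.card E := by
    rw [← hR1, ← hR2, Multiset.card_map, Multiset.card_map]
  exact ⟨F, hF2, ⟨hFs, by rw [hcardF]; exact hcard⟩, R, hR1, hR2, hR3⟩
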